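/- Let G = ⟨r_0, ..., r_5⟩ be a Coxeter group isomorphic to [3,4,3,3,3]. Define t_0 = r_2, t_1 = r_1, t_2 = r_0, t_3 = r_3 r_2 r_1 r_2 r_3, t_4 = r_4, t_5 = r_5. Then the elements t_i are involutions satisfying the Coxeter relations of type [4,3,3,4,3]: (t_0 t_1)^4 = (t_1 t_2)^3 = (t_2 t_3)^3 = (t_3 t_4)^4 = (t_4 t_5)^3 = 1 and (t_i t_j)^2 = 1 for |i - j| ≥ 2. -/

import Mathlib

/-- The Coxeter matrix of the string Coxeter group `[3,4,3,3,3]`. -/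
def M34333 : CoxeterMatrix (Fin 6) where
  M := !![1, 3, 2, 2, 2, 2;
          3, 1, 4, 2, 2, 2;
          2, 4, 1, 3, 2, 2;
          2, 2, 3, 1, 3, 2;
          2, 2, 2, 3, 1, 3;
          2, 2, 2, 2, 3, 1]
  off_diagonal i i' := by fin_cases i <;> fin_cases i' <;> decide

local prefix:100 "σ" => M34333.simple

noncomputable section Stmt15Aux

private def cs15 : CoxeterSystem M34333 M34333.Group := M34333.toCoxeterSystem

private lemma sqS (i : Fin 6) : σ i * σ i = 1 := cs15.simple_mul_simple_self i

private lemma K (i : Fin 6) (w : M34333.Group) : σ i * (σ i * w) = w :=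
  cs15.simple_mul_simple_cancel_left i

private lemma invS (i : Fin 6) : (σ i)⁻¹ = σ i := cs15.inv_simple i

private lemma powM (i j : Fin 6) : (σ i * σ j) ^ (M34333 i j) = 1 :=
  cs15.simple_mul_simple_pow i j

private lemma Sne (i : Fin 6) : σ i ≠ 1 := by
  intro h
  have h1 := cs15.length_simple i
  rw [show cs15.simple i = σ i from rfl, h, cs15.length_one] at h1
  exact absurd h1 (by norm_num)

private lemma ordS (i : Fin 6) : orderOf (σ i) = 2 :=
  orderOf_eq_prime (by rw [pow_two]; exact sqS i) (Sne i)

private lemma comm2 {i j : Fin 6} (h : M34333 i j = 2) : σ i * σ j = σ j * σ i := by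
  have hp := powM i j
  rw [h, pow_two] at hp
  calc σ i * σ j = (σ i * σ j)⁻¹ := eq_inv_of_mul_eq_one_left hp
    _ = σ j * σ i := by rw [mul_inv_rev, invS, invS]

private lemma braid3 {i j : Fin 6} (h : M34333 i j = 3) :
    σ i * (σ j * σ i) = σ j * (σ i * σ j) := by
  have hp := powM i j
  rw [h, show (3 : ℕ) = 2 + 1 from rfl, pow_succ, pow_two] at hp
  have e1 : (σ i * σ j) * (σ i * σ j) = (σ i * σ j)⁻¹ := eq_inv_of_mul_eq_one_left hp
  have h2 : (σ i * σ j) * (σ i * σ j) = σ j * σ i := by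
    rw [e1, mul_inv_rev, invS, invS]
  have h4 : (σ i * σ j) * (σ i * σ j) * σ j = (σ j * σ i) * σ j := by rw [h2]
  simpa only [mul_assoc, sqS, mul_one] using h4

private lemma commT {i j : Fin 6} (h : σ i * σ j = σ j * σ i) (w : M34333.Group) :
    σ i * (σ j * w) = σ j * (σ i * w) := by
  rw [← mul_assoc, h, mul_assoc]

private lemma braidT {i j : Fin 6} (h : σ i * (σ j * σ i) = σ j * (σ i * σ j))
    (w : M34333.Group) : σ i * (σ j * (σ i * w)) = σ j * (σ i * (σ j * w)) := by
  calc σ i * (σ j * (σ i * w)) = (σ i * (σ j * σ i)) * w := by simp only [mul_assoc]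
    _ = (σ j * (σ i * σ j)) * w := by rw [h]
    _ = σ j * (σ i * (σ j * w)) := by simp only [mul_assoc]

private lemma O4t (w : M34333.Group) :
    σ 1 * (σ 2 * (σ 1 * (σ 2 * w))) = σ 2 * (σ 1 * (σ 2 * (σ 1 * w))) := by
  have hp := powM 1 2
  rw [show M34333 1 2 = 4 from rfl] at hp
  have hx : (σ 1 * σ 2) ^ 2 * (σ 1 * σ 2) ^ 2 = 1 := by
    rw [← pow_add]; norm_num [hp]
  have h2 : (σ 1 * σ 2) * (σ 1 * σ 2) = (σ 2 * σ 1) * (σ 2 * σ 1) := by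
    have e := eq_inv_of_mul_eq_one_left hx
    rw [← pow_two, e, ← inv_pow, mul_inv_rev, invS, invS, pow_two]
  calc σ 1 * (σ 2 * (σ 1 * (σ 2 * w))) = ((σ 1 * σ 2) * (σ 1 * σ 2)) * w := by
        simp only [mul_assoc]
    _ = ((σ 2 * σ 1) * (σ 2 * σ 1)) * w := by rw [h2]
    _ = σ 2 * (σ 1 * (σ 2 * (σ 1 * w))) := by simp only [mul_assoc]

private lemma invsq (a b : M34333.Group) (ha : a * a = 1) (hb : b * b = 1)
    (h : a * b = b * a) : (a * b) ^ 2 = 1 := by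
  rw [pow_two, show a * b * (a * b) = a * (b * a) * b by group, ← h,
    show a * (a * b) * b = (a * a) * (b * b) by group, ha, hb, one_mul]

end Stmt15Aux

/-- Let `G = ⟨r_0, …, r_5⟩ ≅ [3,4,3,3,3]` and set
`t_0 = r_2, t_1 = r_1, t_2 = r_0, t_3 = r_3 r_2 r_1 r_2 r_3, t_4 = r_4, t_5 = r_5`.
Then the `t_i` are involutions satisfying the Coxeter relations of the string type
`[4,3,3,4,3]`. -/
theorem stmt_15 : ∀ t : Fin 6 → M34333.Group,
    (t 0 = M34333.simple 2 ∧ t 1 = M34333.simple 1 ∧ t 2 = M34333.simple 0 ∧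
      t 3 = M34333.simple 3 * M34333.simple 2 * M34333.simple 1 * M34333.simple 2 *
        M34333.simple 3 ∧
      t 4 = M34333.simple 4 ∧ t 5 = M34333.simple 5) →
    (∀ i, orderOf (t i) = 2) ∧
      (t 0 * t 1) ^ 4 = 1 ∧ (t 1 * t 2) ^ 3 = 1 ∧ (t 2 * t 3) ^ 3 = 1 ∧
      (t 3 * t 4) ^ 4 = 1 ∧ (t 4 * t 5) ^ 3 = 1 ∧
      (∀ i j : Fin 6, (i : ℕ) + 2 ≤ (j : ℕ) ∨ (j : ℕ) + 2 ≤ (i : ℕ) →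
        (t i * t j) ^ 2 = 1) := by
  intro t ht
  obtain ⟨h0, h1, h2, h3, h4, h5⟩ := ht
  -- tail-form commutation and braid lemmas
  have C02t := commT (comm2 (i := 0) (j := 2) rfl)
  have C03t := commT (comm2 (i := 0) (j := 3) rfl)
  have C13t := commT (comm2 (i := 1) (j := 3) rfl)
  have C31t := commT (comm2 (i := 3) (j := 1) rfl)
  have C41t := commT (comm2 (i := 4) (j := 1) rfl)
  have C42t := commT (comm2 (i := 4) (j := 2) rfl)
  have C51t := commT (comm2 (i := 5) (j := 1) rfl)
  have C52t := commT (comm2 (i := 5) (j := 2) rfl)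
  have C53t := commT (comm2 (i := 5) (j := 3) rfl)
  have C31e := comm2 (i := 3) (j := 1) rfl
  have C53e := comm2 (i := 5) (j := 3) rfl
  have B23t := braidT (braid3 (i := 2) (j := 3) rfl)
  have B32t := braidT (braid3 (i := 3) (j := 2) rfl)
  have B323e := braid3 (i := 3) (j := 2) rfl
  have B343e := braid3 (i := 3) (j := 4) rfl
  -- power relations for adjacent simple pairs
  have p21 : (σ 2 * σ 1) ^ 4 = 1 := by
    have := powM 2 1; rwa [show M34333 2 1 = 4 from rfl] at this
  have p10 : (σ 1 * σ 0) ^ 3 = 1 := by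
    have := powM 1 0; rwa [show M34333 1 0 = 3 from rfl] at this
  have p01 : (σ 0 * σ 1) ^ 3 = 1 := by
    have := powM 0 1; rwa [show M34333 0 1 = 3 from rfl] at this
  have p45 : (σ 4 * σ 5) ^ 3 = 1 := by
    have := powM 4 5; rwa [show M34333 4 5 = 3 from rfl] at this
  -- the key commutation fact
  have hcommbc :
      σ 2 * (σ 1 * (σ 2 * (σ 3 * (σ 2 * (σ 1 * (σ 2 * σ 3)))))) =
      σ 3 * (σ 2 * (σ 1 * (σ 2 * (σ 3 * (σ 2 * (σ 1 * σ 2)))))) := by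
    have hL : σ 2 * (σ 1 * (σ 2 * (σ 3 * (σ 2 * (σ 1 * (σ 2 * σ 3)))))) =
        σ 2 * (σ 3 * (σ 2 * (σ 1 * (σ 2 * (σ 1 * (σ 3 * σ 2)))))) := by
      rw [B23t, C31t, C13t, B323e, O4t]
    have hR : σ 3 * (σ 2 * (σ 1 * (σ 2 * (σ 3 * (σ 2 * (σ 1 * σ 2)))))) =
        σ 2 * (σ 3 * (σ 2 * (σ 1 * (σ 2 * (σ 1 * (σ 3 * σ 2)))))) := by
      rw [B23t, C31t, C13t, B32t]
    exact hL.trans hR.symm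
  -- x = σ2 σ1 σ2 σ3 has order dividing 4
  have hb : (σ 2 * (σ 1 * σ 2)) * (σ 2 * (σ 1 * σ 2)) = 1 := by
    simp only [mul_assoc, K, sqS, mul_one]
  have hcsq : (σ 3 * (σ 2 * (σ 1 * (σ 2 * σ 3)))) * (σ 3 * (σ 2 * (σ 1 * (σ 2 * σ 3)))) = 1 := by
    simp only [mul_assoc, K, sqS, mul_one]
  have hcmain : (σ 2 * (σ 1 * σ 2)) * (σ 3 * (σ 2 * (σ 1 * (σ 2 * σ 3)))) =
      (σ 3 * (σ 2 * (σ 1 * (σ 2 * σ 3)))) * (σ 2 * (σ 1 * σ 2)) := by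
    simp only [mul_assoc]; exact hcommbc
  have hbc2 := invsq _ _ hb hcsq hcmain
  have hx4 : (σ 2 * (σ 1 * (σ 2 * σ 3))) ^ 4 = 1 := by
    have e2 : (σ 2 * (σ 1 * (σ 2 * σ 3))) ^ 2 =
        (σ 2 * (σ 1 * σ 2)) * (σ 3 * (σ 2 * (σ 1 * (σ 2 * σ 3)))) := by
      rw [pow_two]; simp only [mul_assoc]
    rw [show (4 : ℕ) = 2 * 2 from rfl, pow_mul, e2, hbc2]
  -- square of t3
  have TT : (σ 3 * σ 2 * σ 1 * σ 2 * σ 3) * (σ 3 * σ 2 * σ 1 * σ 2 * σ 3) = 1 := by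
    simp only [mul_assoc, K, sqS, mul_one]
  -- commutation of t3 with σ2, σ1, σ5
  have c23T : σ 2 * (σ 3 * σ 2 * σ 1 * σ 2 * σ 3) = (σ 3 * σ 2 * σ 1 * σ 2 * σ 3) * σ 2 := by
    simp only [mul_assoc]
    rw [B23t, C31t, B323e]
  have c13T : σ 1 * (σ 3 * σ 2 * σ 1 * σ 2 * σ 3) = (σ 3 * σ 2 * σ 1 * σ 2 * σ 3) * σ 1 := by
    simp only [mul_assoc]
    rw [C13t, O4t, C31e]
  have c35T : (σ 3 * σ 2 * σ 1 * σ 2 * σ 3) * σ 5 = σ 5 * (σ 3 * σ 2 * σ 1 * σ 2 * σ 3) := by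
    simp only [mul_assoc]
    rw [C53t, C52t, C51t, C52t, C53e]
  refine ⟨?_, ?_, ?_, ?_, ?_, ?_, ?_⟩
  · -- orders
    intro i
    fin_cases i
    · show orderOf (t 0) = 2; rw [h0]; exact ordS 2
    · show orderOf (t 1) = 2; rw [h1]; exact ordS 1
    · show orderOf (t 2) = 2; rw [h2]; exact ordS 0
    · show orderOf (t 3) = 2
      rw [h3]
      have hsc : SemiconjBy (σ 3 * σ 2) (σ 1) (σ 3 * σ 2 * σ 1 * σ 2 * σ 3) := by
        show (σ 3 * σ 2) * σ 1 = (σ 3 * σ 2 * σ 1 * σ 2 * σ 3) * (σ 3 * σ 2)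
        simp only [mul_assoc, K, sqS, mul_one]
      rw [← SemiconjBy.orderOf_eq _ hsc]
      exact ordS 1
    · show orderOf (t 4) = 2; rw [h4]; exact ordS 4
    · show orderOf (t 5) = 2; rw [h5]; exact ordS 5
  · rw [h0, h1]; exact p21
  · rw [h1, h2]; exact p10
  · rw [h2, h3]
    have hw : (σ 3 * σ 2)⁻¹ = σ 2 * σ 3 := by rw [mul_inv_rev, invS, invS]
    have hc : σ 0 * (σ 3 * σ 2 * σ 1 * σ 2 * σ 3) =
        (σ 3 * σ 2) * (σ 0 * σ 1) * (σ 3 * σ 2)⁻¹ := by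
      rw [hw]
      simp only [mul_assoc]
      rw [C03t, C02t]
    rw [hc, conj_pow, p01, mul_one]
    group
  · rw [h3, h4]
    have hw : (σ 3 * σ 4)⁻¹ = σ 4 * σ 3 := by rw [mul_inv_rev, invS, invS]
    have hc : (σ 3 * σ 2 * σ 1 * σ 2 * σ 3) * σ 4 =
        (σ 3 * σ 4) * (σ 2 * (σ 1 * (σ 2 * σ 3))) * (σ 3 * σ 4)⁻¹ := by
      rw [hw]
      simp only [mul_assoc]
      rw [B343e, C42t, C41t, C42t, K]
    rw [hc, conj_pow, hx4, mul_one]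
    group
  · rw [h4, h5]; exact p45
  · -- the commuting pairs
    have P02 : (t 0 * t 2) ^ 2 = 1 := by
      rw [h0, h2]; exact invsq _ _ (sqS 2) (sqS 0) (comm2 (i := 2) (j := 0) rfl)
    have P20 : (t 2 * t 0) ^ 2 = 1 := by
      rw [h0, h2]; exact invsq _ _ (sqS 0) (sqS 2) (comm2 (i := 0) (j := 2) rfl)
    have P04 : (t 0 * t 4) ^ 2 = 1 := by
      rw [h0, h4]; exact invsq _ _ (sqS 2) (sqS 4) (comm2 (i := 2) (j := 4) rfl)
    have P40 : (t 4 * t 0) ^ 2 = 1 := by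
      rw [h0, h4]; exact invsq _ _ (sqS 4) (sqS 2) (comm2 (i := 4) (j := 2) rfl)
    have P05 : (t 0 * t 5) ^ 2 = 1 := by
      rw [h0, h5]; exact invsq _ _ (sqS 2) (sqS 5) (comm2 (i := 2) (j := 5) rfl)
    have P50 : (t 5 * t 0) ^ 2 = 1 := by
      rw [h0, h5]; exact invsq _ _ (sqS 5) (sqS 2) (comm2 (i := 5) (j := 2) rfl)
    have P14 : (t 1 * t 4) ^ 2 = 1 := by
      rw [h1, h4]; exact invsq _ _ (sqS 1) (sqS 4) (comm2 (i := 1) (j := 4) rfl)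
    have P41 : (t 4 * t 1) ^ 2 = 1 := by
      rw [h1, h4]; exact invsq _ _ (sqS 4) (sqS 1) (comm2 (i := 4) (j := 1) rfl)
    have P15 : (t 1 * t 5) ^ 2 = 1 := by
      rw [h1, h5]; exact invsq _ _ (sqS 1) (sqS 5) (comm2 (i := 1) (j := 5) rfl)
    have P51 : (t 5 * t 1) ^ 2 = 1 := by
      rw [h1, h5]; exact invsq _ _ (sqS 5) (sqS 1) (comm2 (i := 5) (j := 1) rfl)
    have P24 : (t 2 * t 4) ^ 2 = 1 := by
      rw [h2, h4]; exact invsq _ _ (sqS 0) (sqS 4) (comm2 (i := 0) (j := 4) rfl)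
    have P42 : (t 4 * t 2) ^ 2 = 1 := by
      rw [h2, h4]; exact invsq _ _ (sqS 4) (sqS 0) (comm2 (i := 4) (j := 0) rfl)
    have P25 : (t 2 * t 5) ^ 2 = 1 := by
      rw [h2, h5]; exact invsq _ _ (sqS 0) (sqS 5) (comm2 (i := 0) (j := 5) rfl)
    have P52 : (t 5 * t 2) ^ 2 = 1 := by
      rw [h2, h5]; exact invsq _ _ (sqS 5) (sqS 0) (comm2 (i := 5) (j := 0) rfl)
    have P03 : (t 0 * t 3) ^ 2 = 1 := by
      rw [h0, h3]; exact invsq _ _ (sqS 2) TT c23T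
    have P30 : (t 3 * t 0) ^ 2 = 1 := by
      rw [h0, h3]; exact invsq _ _ TT (sqS 2) c23T.symm
    have P13 : (t 1 * t 3) ^ 2 = 1 := by
      rw [h1, h3]; exact invsq _ _ (sqS 1) TT c13T
    have P31 : (t 3 * t 1) ^ 2 = 1 := by
      rw [h1, h3]; exact invsq _ _ TT (sqS 1) c13T.symm
    have P35 : (t 3 * t 5) ^ 2 = 1 := by
      rw [h3, h5]; exact invsq _ _ TT (sqS 5) c35T
    have P53 : (t 5 * t 3) ^ 2 = 1 := by
      rw [h3, h5]; exact invsq _ _ (sqS 5) TT c35T.symm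
    intro i j hij
    fin_cases i <;> fin_cases j <;>
      first
        | exact absurd hij (by decide)
        | exact P02 | exact P20 | exact P03 | exact P30 | exact P04 | exact P40
        | exact P05 | exact P50 | exact P13 | exact P31 | exact P14 | exact P41
        | exact P15 | exact P51 | exact P24 | exact P42 | exact P25 | exact P52
        | exact P35 | exact P53
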